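/- (Theorem 1, feasibility of the MIQP solution.) With the setup of Lemma 1, let λ = (λ_1,…,λ_m) ∈ ℝ^{m·n_v} with λ ≥ 0 componentwise and δ ∈ Δ := ℝ^{n_c} × {0,1}^{n_b} satisfy the stacked constraints of the mixed-integer program: 𝐕̄ᵀλ + G^H 𝐁 h + G^θ 𝐀 θ + G^δ δ + g ≤ 0 and 𝐖̄ᵀλ = (I_m ⊗ [H 0]ᵀ) 𝐆ᵀ + 𝐠ᵀ, where 𝐕̄ := diag(𝐯,…,𝐯), 𝐖̄ := diag(𝐖,…,𝐖) are m-fold block-diagonal matrices, ⊗ is the Kronecker product, 𝐆 collects the row blocks G^H_{i·}𝐁 and 𝐠 collects the row blocks G^w_{i·}, and [H 0] is H padded with n_w zero columns. Then (H, h, θ) belongs to the robust constraint set C^φ := {(H,h,θ) : ∀𝐰 ∈ 𝒲, ∃δ ∈ Δ, g^φ(H,h,θ,𝐰,δ) ≤ 0}; that is, any feasible (hence any optimal) solution of the mixed-integer quadratic program is a feasible, possibly suboptimal, solution of the robust policy synthesis problem. -/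

import Mathlib

open Matrix Kronecker

/-- `padZero M` is the matrix `M` padded on the right with `q` zero columns,
e.g. `[H 0]` is `padZero H` and `[𝐁H 0]` is `padZero (B * H)`. -/
noncomputable def padZero {α : Type*} {p q : ℕ} (M : Matrix α (Fin p) ℝ) :
    Matrix α (Fin (p + q)) ℝ :=
  fun i j => if h : (j : ℕ) < p then M i ⟨(j : ℕ), h⟩ else 0

/-- `δ ∈ Δ := ℝ^{n_c} × {0,1}^{n_b}`: the last `n_b` entries are binary. -/
def memDelta (n_c n_b : ℕ) (δ : Fin (n_c + n_b) → ℝ) : Prop :=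
  ∀ j : Fin (n_c + n_b), n_c ≤ (j : ℕ) → δ j = 0 ∨ δ j = 1

/-- **Theorem 1 (feasibility of the MIQP solution).**
If the stacked multiplier `lam = (lam_1, …, lam_m) ≥ 0` and `δ ∈ Δ` satisfy the
stacked constraints `𝐕̄ᵀλ + G^H 𝐁 h + G^θ 𝐀 θ + G^δ δ + g ≤ 0` and
`𝐖̄ᵀλ = (I_m ⊗ [H 0]ᵀ) 𝐆ᵀ + 𝐠ᵀ` of the mixed-integer program (Problem 3), then the
policy `(H, h, θ)` belongs to the robust constraint set
`C^φ = {(H,h,θ) : ∀ 𝐰 ∈ 𝒲, ∃ δ ∈ Δ, g^φ(H,h,θ,𝐰,δ) ≤ 0}`. -/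
lemma mul_padZero {p q r s : ℕ} (B : Matrix (Fin r) (Fin s) ℝ)
    (H : Matrix (Fin s) (Fin p) ℝ) :
    B * padZero (q := q) H = padZero (q := q) (B * H) := by
  ext i k
  by_cases hk : (k : ℕ) < p
  · simp [padZero, hk, Matrix.mul_apply]
  · simp [padZero, hk, Matrix.mul_apply]

theorem miqp_solution_feasible
    (N n_x n_u n_w n_v m n_c n_b : ℕ)
    (A : Matrix (Fin ((N+1)*n_x)) (Fin n_x) ℝ)
    (B : Matrix (Fin ((N+1)*n_x)) (Fin (N*n_u)) ℝ)
    (GH : Matrix (Fin m) (Fin ((N+1)*n_x)) ℝ)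
    (Gw : Matrix (Fin m) (Fin (N*n_w + n_w)) ℝ)
    (Gθ : Matrix (Fin m) (Fin ((N+1)*n_x)) ℝ)
    (Gδ : Matrix (Fin m) (Fin (n_c + n_b)) ℝ)
    (g : Fin m → ℝ)
    (Wb : Matrix (Fin n_v) (Fin (N*n_w + n_w)) ℝ)
    (v : Fin n_v → ℝ)
    (H : Matrix (Fin (N*n_u)) (Fin (N*n_w)) ℝ)
    (h : Fin (N*n_u) → ℝ) (θ : Fin n_x → ℝ)
    (δ : Fin (n_c + n_b) → ℝ) (hδ : memDelta n_c n_b δ)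
    (lam : Fin m × Fin n_v → ℝ)
    (hlam : ∀ p, 0 ≤ lam p)
    -- `𝐕̄ := diag(𝐯, …, 𝐯)` and `𝐖̄ := diag(𝐖, …, 𝐖)`, `m`-fold block diagonal
    (Vbar : Matrix (Fin m × Fin n_v) (Fin m) ℝ)
    (hVbar : Vbar = fun p j => if p.1 = j then v p.2 else 0)
    (Wbar : Matrix (Fin m × Fin n_v) (Fin m × Fin (N*n_w + n_w)) ℝ)
    (hWbar : Wbar = fun p q => if p.1 = q.1 then Wb p.2 q.2 else 0)
    -- `𝐆ᵀ` collects the row blocks `(G^H_{i·} 𝐁)ᵀ`, `𝐠ᵀ` the row blocks `(G^w_{i·})ᵀ`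
    (Gvec : Fin m × Fin (N*n_u) → ℝ) (hGvec : Gvec = fun q => (GH * B) q.1 q.2)
    (gvec : Fin m × Fin (N*n_w + n_w) → ℝ) (hgvec : gvec = fun p => Gw p.1 p.2)
    -- the stacked inequality constraint `𝐕̄ᵀλ + G^H 𝐁 h + G^θ 𝐀 θ + G^δ δ + g ≤ 0`
    (hineq : Vbarᵀ.mulVec lam + (GH * B).mulVec h + (Gθ * A).mulVec θ
        + Gδ.mulVec δ + g ≤ 0)
    -- the stacked equality constraint `𝐖̄ᵀλ = (I_m ⊗ [H 0]ᵀ) 𝐆ᵀ + 𝐠ᵀ`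
    (heq : Wbarᵀ.mulVec lam =
      ((1 : Matrix (Fin m) (Fin m) ℝ) ⊗ₖ (padZero (q := n_w) H)ᵀ).mulVec Gvec + gvec) :
    ∀ w : Fin (N*n_w + n_w) → ℝ, Wb.mulVec w ≤ v →
      ∃ δ' : Fin (n_c + n_b) → ℝ, memDelta n_c n_b δ' ∧
        ∀ i, (GH * padZero (q := n_w) (B * H) + Gw).mulVec w i + (GH * B).mulVec h i
          + (Gθ * A).mulVec θ i + Gδ.mulVec δ' i + g i ≤ 0 := by
  intro w hw
  refine ⟨δ, hδ, fun i => ?_⟩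
  have hVrow : Vbarᵀ.mulVec lam i = ∑ j : Fin n_v, v j * lam (i, j) := by
    simp only [Matrix.mulVec, dotProduct, Matrix.transpose_apply]
    simp [hVbar, Matrix.mulVec, dotProduct, Matrix.transpose_apply,
      Fintype.sum_prod_type, ite_mul, zero_mul, Finset.sum_ite_eq]
  have hWrow : ∀ k, (GH * padZero (q := n_w) (B * H) + Gw) i k
      = ∑ j : Fin n_v, Wb j k * lam (i, j) := by
    intro k
    have h1 := congrFun heq (i, k)
    simp only [Matrix.mulVec, dotProduct, Matrix.transpose_apply] at h1
    simp only [hWbar, hGvec, hgvec, Matrix.mulVec, dotProduct,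
      Matrix.transpose_apply, Fintype.sum_prod_type, Matrix.kroneckerMap_apply,
      Matrix.one_apply, ite_mul, zero_mul, one_mul, Pi.add_apply,
      Finset.sum_ite_irrel, Finset.sum_const_zero, Finset.sum_ite_eq,
      Finset.sum_ite_eq', Finset.mem_univ, if_true] at h1
    have h2 : (∑ u : Fin (N*n_u), (GH*B) i u * padZero (q:=n_w) H u k)
        = ∑ u : Fin (N*n_u), padZero (q:=n_w) H u k * (GH*B) i u := by
      simp [mul_comm]
    rw [← mul_padZero, ← Matrix.mul_assoc, Matrix.add_apply, Matrix.mul_apply]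
    linarith [h1, h2]
  have key : (GH * padZero (q := n_w) (B * H) + Gw).mulVec w i
      ≤ Vbarᵀ.mulVec lam i := by
    rw [hVrow]
    calc (GH * padZero (q := n_w) (B * H) + Gw).mulVec w i
        = ∑ k, (∑ j : Fin n_v, Wb j k * lam (i, j)) * w k := by
          simp [Matrix.mulVec, dotProduct, hWrow]
      _ = ∑ k, ∑ j : Fin n_v, Wb j k * lam (i, j) * w k := by
          simp [Finset.sum_mul]
      _ = ∑ j : Fin n_v, ∑ k, Wb j k * lam (i, j) * w k := Finset.sum_comm
      _ = ∑ j : Fin n_v, lam (i, j) * Wb.mulVec w j := by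
          refine Finset.sum_congr rfl fun j _ => ?_
          simp only [Matrix.mulVec, dotProduct, Finset.mul_sum]
          exact Finset.sum_congr rfl fun k _ => by ring
      _ ≤ ∑ j : Fin n_v, lam (i, j) * v j := by
          apply Finset.sum_le_sum
          intro j _
          exact mul_le_mul_of_nonneg_left (hw j) (hlam (i, j))
      _ = ∑ j : Fin n_v, v j * lam (i, j) := by
          simp [mul_comm]
  have := hineq i
  simp only [Pi.add_apply, Pi.le_def, Pi.zero_apply] at this
  linarith
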